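/- arXiv:1804.01268 — 3 statements merged into one kernel-verified Lean document; each statement's English description precedes it below -/
import Mathlib

section
/- Let μ be a Borel probability measure on ℝ whose cumulative distribution function F(x) = μ((−∞,x]) is twice differentiable with bounded second derivative, and such that f = F′ is a density of μ. Then (1/Δ) ∫_ℝ (F(y+Δ) − F(y)) dμ(y) → ∫_ℝ f(y)² dy as Δ → 0⁺. -/
open MeasureTheory Filter
open scoped NNReal ENNReal

/-- If the cdf `F` of a Borel probability measure `μ` on `ℝ` is twice differentiable
with bounded second derivative, and `f = F′` is a density of `μ`, then
`(1/Δ) ∫ (F(y+Δ) − F(y)) dμ(y) → ∫ f(y)² dy` as `Δ → 0⁺`. -/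
theorem stmt_3 (μ : Measure ℝ) [IsProbabilityMeasure μ]
    (F f : ℝ → ℝ) (hF : ∀ x, F x = (μ (Set.Iic x)).toReal)
    (hF' : ∀ x, HasDerivAt F (f x) x)
    (hf' : ∀ x, DifferentiableAt ℝ f x)
    (C : ℝ) (hC : ∀ x, |deriv f x| ≤ C)
    (hdens : μ = volume.withDensity (fun x => ENNReal.ofReal (f x))) :
    Tendsto (fun Δ : ℝ => (1 / Δ) * ∫ y, (F (y + Δ) - F y) ∂μ)
      (nhdsWithin 0 (Set.Ioi 0)) (nhds (∫ y, (f y) ^ 2)) := by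
  have hC0 : 0 ≤ C := le_trans (abs_nonneg _) (hC 0)
  have hdiff : Differentiable ℝ f := hf'
  have hfc : Continuous f := hdiff.continuous
  -- f is C-Lipschitz
  have hLip : ∀ a b : ℝ, |f b - f a| ≤ C * |b - a| := by
    intro a b
    have := convex_univ.norm_image_sub_le_of_norm_hasDerivWithin_le
      (f := f) (f' := deriv f)
      (fun x _ => ((hf' x).hasDerivAt).hasDerivWithinAt)
      (fun x _ => hC x) (Set.mem_univ a) (Set.mem_univ b)
    simpa using this
  -- Taylor estimate
  have hTay : ∀ (y : ℝ) (Δ : ℝ), 0 ≤ Δ → |F (y + Δ) - F y - Δ * f y| ≤ C * Δ ^ 2 := by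
    intro y Δ hΔ
    set g : ℝ → ℝ := fun t => F (y + t) - t * f y with hg
    have hgd : ∀ t : ℝ, HasDerivAt g (f (y + t) - f y) t := by
      intro t
      have h1 : HasDerivAt (fun t : ℝ => F (y + t)) (f (y + t) * 1) t :=
        (hF' (y + t)).comp t ((hasDerivAt_id t).const_add y)
      rw [show f (y + t) - f y = f (y + t) * 1 - f y by ring]
      exact h1.sub (hasDerivAt_mul_const (f y))
    have key := (convex_Icc (0:ℝ) Δ).norm_image_sub_le_of_norm_hasDerivWithin_le
      (f := g) (f' := fun t => f (y + t) - f y)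
      (fun t _ => (hgd t).hasDerivWithinAt)
      (fun t ht => by
        have : |f (y + t) - f y| ≤ C * |t| := by simpa using hLip y (y + t)
        have h2 : C * |t| ≤ C * Δ := by
          have : |t| ≤ Δ := by
            rw [abs_of_nonneg ht.1]; exact ht.2
          exact mul_le_mul_of_nonneg_left this hC0
        simpa [Real.norm_eq_abs] using this.trans h2)
      ⟨le_refl 0, hΔ⟩ ⟨hΔ, le_refl Δ⟩
    have : |g Δ - g 0| ≤ C * Δ * |Δ - 0| := by simpa [Real.norm_eq_abs] using key
    calc |F (y + Δ) - F y - Δ * f y| = |g Δ - g 0| := by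
          simp [hg, mul_comm]; ring_nf
      _ ≤ C * Δ * |Δ - 0| := this
      _ = C * Δ ^ 2 := by rw [abs_of_nonneg (by simpa using hΔ)]; ring
  -- F takes values in [0,1]
  have hF01 : ∀ x, 0 ≤ F x ∧ F x ≤ 1 := by
    intro x
    rw [hF]
    constructor
    · exact ENNReal.toReal_nonneg
    · have : μ (Set.Iic x) ≤ 1 := prob_le_one
      simpa using ENNReal.toReal_le_of_le_ofReal (by norm_num) (by simpa using this)
  -- f ≥ 0
  have hf0 : ∀ y, 0 ≤ f y := by
    intro y
    by_contra h
    push_neg at h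
    set Δ := -f y / (C + 1) with hΔdef
    have hΔpos : 0 < Δ := div_pos (by linarith) (by linarith)
    have h1 := hTay y Δ hΔpos.le
    have h2 : 0 ≤ F (y + Δ) - F y := by
      have : F y ≤ F (y + Δ) := by
        rw [hF, hF]
        exact ENNReal.toReal_mono (measure_ne_top μ _)
          (measure_mono (Set.Iic_subset_Iic.2 (by linarith)))
      linarith
    rw [abs_le] at h1
    have h3 : Δ * f y ≥ -(C * Δ ^ 2) := by nlinarith [h1.1]
    have h4 : -(C * Δ) ≤ f y := by
      have hm : Δ * (-(C * Δ)) ≤ Δ * f y := by nlinarith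
      exact (mul_le_mul_iff_right₀ hΔpos).mp hm
    have hΔeq : Δ * (C + 1) = -f y := by
      rw [hΔdef]; field_simp
    linarith
  -- f bounded
  have hfB : ∀ y, f y ≤ 1 + C := by
    intro y
    have h1 := hTay y 1 zero_le_one
    rw [abs_le] at h1
    have h2 := (hF01 (y + 1)).2
    have h3 := (hF01 y).1
    nlinarith [h1.2]
  -- integral identity
  have hmain : (∫ y, f y ∂μ) = ∫ y, (f y) ^ 2 := by
    have hmeas : Measurable fun x => Real.toNNReal (f x) :=
      (measurable_real_toNNReal.comp hfc.measurable)
    have heq : μ = volume.withDensity (fun x => ((Real.toNNReal (f x) : ℝ≥0) : ℝ≥0∞)) := hdens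
    rw [heq, integral_withDensity_eq_integral_smul hmeas]
    congr 1
    ext y
    simp only [NNReal.smul_def, Real.coe_toNNReal _ (hf0 y), smul_eq_mul]
    ring
  rw [← hmain]
  -- integrability
  have hFm : ∀ Δ : ℝ, AEStronglyMeasurable (fun y => F (y + Δ) - F y) μ := by
    intro Δ
    have hFc : Continuous F := by
      have : Differentiable ℝ F := fun x => (hF' x).differentiableAt
      exact this.continuous
    exact ((hFc.comp (continuous_id.add continuous_const)).sub hFc).aestronglyMeasurable
  have hfint : Integrable f μ :=
    (integrable_const (1 + C)).mono' hfc.aestronglyMeasurable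
      (Filter.Eventually.of_forall fun y => by
        rw [Real.norm_eq_abs, abs_of_nonneg (hf0 y)]; exact hfB y)
  have hint : ∀ Δ : ℝ, Integrable (fun y => F (y + Δ) - F y) μ := by
    intro Δ
    refine (integrable_const (2:ℝ)).mono' (hFm Δ)
      (Filter.Eventually.of_forall fun y => ?_)
    have h1 := hF01 (y + Δ); have h2 := hF01 y
    rw [Real.norm_eq_abs, abs_le]; constructor <;> linarith [h1.1, h1.2, h2.1, h2.2]
  -- key bound for Δ > 0
  rw [tendsto_iff_norm_sub_tendsto_zero]
  have hbound : ∀ Δ : ℝ, Δ ∈ Set.Ioi (0:ℝ) →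
      ‖(1 / Δ) * (∫ y, (F (y + Δ) - F y) ∂μ) - ∫ y, f y ∂μ‖ ≤ C * Δ := by
    intro Δ hΔ
    rw [Set.mem_Ioi] at hΔ
    have heq : (1 / Δ) * (∫ y, (F (y + Δ) - F y) ∂μ) - ∫ y, f y ∂μ
        = (1 / Δ) * ∫ y, (F (y + Δ) - F y - Δ * f y) ∂μ := by
      rw [integral_sub (hint Δ) (hfint.const_mul Δ)]
      field_simp
      rw [MeasureTheory.integral_const_mul]
    rw [heq]
    have hb : ‖∫ y, (F (y + Δ) - F y - Δ * f y) ∂μ‖ ≤ C * Δ ^ 2 := by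
      have := norm_integral_le_of_norm_le_const
        (C := C * Δ ^ 2) (μ := μ)
        (Filter.Eventually.of_forall fun y => by
          rw [Real.norm_eq_abs]; exact hTay y Δ hΔ.le)
      simpa using this
    rw [norm_mul, Real.norm_eq_abs, Real.norm_eq_abs]
    rw [abs_of_pos (by positivity : (0:ℝ) < 1 / Δ)]
    calc (1 / Δ) * |∫ y, (F (y + Δ) - F y - Δ * f y) ∂μ|
        ≤ (1 / Δ) * (C * Δ ^ 2) := by
          apply mul_le_mul_of_nonneg_left _ (by positivity)
          simpa [Real.norm_eq_abs] using hb
      _ = C * Δ := by field_simp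
  have hCΔ : Tendsto (fun Δ : ℝ => C * Δ) (nhdsWithin 0 (Set.Ioi 0)) (nhds 0) := by
    have : Tendsto (fun Δ : ℝ => C * Δ) (nhds 0) (nhds (C * 0)) :=
      (continuous_const.mul continuous_id).tendsto 0
    simpa using this.mono_left nhdsWithin_le_nhds
  refine squeeze_zero_norm' ?_ hCΔ
  filter_upwards [self_mem_nhdsWithin] with Δ hΔ
  simpa using hbound Δ hΔ
end

section
/- There exists a universal constant K > 0 such that the following holds. Let n ≥ 2, C > 0, and let (ξ_{i,j})_{1≤i,j≤n} be real random variables on a probability space such that for all integers 0 ≤ q ≤ p ≤ n and 0 ≤ h ≤ l ≤ n, E[ ( Σ_{i=q+1}^{p} Σ_{j=h+1}^{l} ξ_{i,j} )² ] ≤ C (p−q)(l−h). Then for every ε > 0, P( max_{1≤k≤n} max_{1≤l≤n} | Σ_{i=1}^{k} Σ_{j=1}^{l} ξ_{i,j} | ≥ ε n^{3/2} ) ≤ K C ε^{−2} n^{−1/3}. -/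
open MeasureTheory Finset

namespace Stmt11Aux

lemma pow12 : ∀ m : ℕ, (m+1)^12 ≤ 12^12 * 2^m := by
  intro m
  induction m using Nat.strong_induction_on with
  | _ m ih =>
    rcases lt_or_ge m 12 with h | h
    · calc (m+1)^12 ≤ 12^12 := Nat.pow_le_pow_left (by omega) 12
        _ ≤ 12^12 * 2^m := Nat.le_mul_of_pos_right _ (Nat.pow_pos Nat.zero_lt_two)
    · rcases lt_or_ge m 23 with h2 | h2
      · calc (m+1)^12 ≤ 24^12 := Nat.pow_le_pow_left (by omega) 12
          _ = 12^12 * 2^12 := by norm_num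
          _ ≤ 12^12 * 2^m := Nat.mul_le_mul_left _ (Nat.pow_le_pow_right (by norm_num) h)
      · have ih' := ih (m - 12) (by omega)
        calc (m+1)^12 ≤ (2*(m-12+1))^12 := Nat.pow_le_pow_left (by omega) 12
          _ = 2^12 * (m-12+1)^12 := by rw [Nat.mul_pow]
          _ ≤ 2^12 * (12^12 * 2^(m-12)) := Nat.mul_le_mul_left _ ih'
          _ = 12^12 * 2^(12 + (m-12)) := by rw [Nat.pow_add]; ring
          _ = 12^12 * 2^m := by congr 2; omega

/-- round down to a multiple of `2^j` -/
def g (j k : ℕ) : ℕ := k / 2^j * 2^j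

lemma g_zero (k : ℕ) : g 0 k = k := by simp [g]

lemma g_le_self (j k : ℕ) : g j k ≤ k := Nat.div_mul_le_self _ _

lemma g_succ_le (j k : ℕ) : g (j+1) k ≤ g j k := by
  have h1 : g (j+1) k = k / 2^j / 2 * 2 * 2^j := by
    rw [g, pow_succ, ← Nat.div_div_eq_div_mul]; ring
  rw [h1, g]
  exact Nat.mul_le_mul_right _ (Nat.div_mul_le_self _ _)

lemma g_dichotomy (j k : ℕ) : g j k = g (j+1) k ∨ g j k = g (j+1) k + 2^j := by
  have h1 : g (j+1) k = k / 2^j / 2 * 2 * 2^j := by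
    rw [g, pow_succ, ← Nat.div_div_eq_div_mul]; ring
  set u := k / 2^j with hu
  have h2 : g j k = u * 2^j := rfl
  rcases Nat.mod_two_eq_zero_or_one u with h | h
  · left
    rw [h1, h2]
    congr 1
    omega
  · right
    rw [h1, h2]
    have : u * 2 ^ j = (u / 2 * 2 + 1) * 2 ^ j := by congr 1; omega
    rw [this, Nat.add_mul, Nat.one_mul]

lemma g_eq_zero {j k : ℕ} (h : k < 2^j) : g j k = 0 := by
  rw [g, Nat.div_eq_of_lt h, Nat.zero_mul]

lemma block_repr {a k n : ℕ} (hk : k ≤ n) (hne : g a k ≠ g (a+1) k) :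
    ∃ i, i ∈ range (n / 2^a) ∧ g (a+1) k = i * 2^a ∧ g a k = (i+1) * 2^a := by
  rcases g_dichotomy a k with h | h
  · exact absurd h.symm (Ne.symm hne)
  have hrep : g (a+1) k = (k / 2^(a+1) * 2) * 2^a := by
    rw [g, pow_succ]; ring
  refine ⟨k / 2^(a+1) * 2, ?_, hrep, ?_⟩
  · rw [mem_range]
    have h1 : (k / 2^(a+1) * 2 + 1) * 2^a ≤ n := by
      rw [Nat.add_mul, Nat.one_mul, ← hrep, ← h]
      exact le_trans (g_le_self a k) hk
    have h2 : k / 2^(a+1) * 2 + 1 ≤ n / 2^a :=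
      (Nat.le_div_iff_mul_le (Nat.pow_pos Nat.zero_lt_two)).mpr h1
    omega
  · rw [h, hrep, Nat.add_mul, Nat.one_mul]

lemma telescope (a : ℕ → ℝ) (k N : ℕ) (hk : k < 2^N) :
    ∑ i ∈ Ioc 0 k, a i = ∑ j ∈ range N, ∑ i ∈ Ioc (g (j+1) k) (g j k), a i := by
  have h1 : ∀ j, ∑ i ∈ Ioc (g (j+1) k) (g j k), a i
      = (∑ i ∈ Ioc 0 (g j k), a i) - ∑ i ∈ Ioc 0 (g (j+1) k), a i := by
    intro j
    have := Finset.sum_Ioc_consecutive a (Nat.zero_le (g (j+1) k)) (g_succ_le j k)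
    linarith
  rw [Finset.sum_congr rfl fun j _ => h1 j,
    Finset.sum_range_sub' (fun j => ∑ i ∈ Ioc 0 (g j k), a i) N,
    g_zero, g_eq_zero hk]
  simp

/-- The key deterministic inequality: the square of any lower-left rectangular
partial sum is dominated by `N²` times the sum of the squares of all dyadic
rectangular sums. -/
lemma key (f : ℕ → ℕ → ℝ) (n N k l : ℕ) (hk : k ≤ n) (hl : l ≤ n) (hn : n < 2^N) :
    (∑ x ∈ Ioc 0 k, ∑ y ∈ Ioc 0 l, f x y)^2
      ≤ (N:ℝ)^2 * ∑ a ∈ range N, ∑ b ∈ range N, ∑ i ∈ range (n/2^a), ∑ i' ∈ range (n/2^b),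
          (∑ x ∈ Ioc (i*2^a) ((i+1)*2^a), ∑ y ∈ Ioc (i'*2^b) ((i'+1)*2^b), f x y)^2 := by
  have hk2 : k < 2^N := lt_of_le_of_lt hk hn
  have hl2 : l < 2^N := lt_of_le_of_lt hl hn
  have hid : ∑ x ∈ Ioc 0 k, ∑ y ∈ Ioc 0 l, f x y
      = ∑ p ∈ range N ×ˢ range N,
          ∑ x ∈ Ioc (g (p.1+1) k) (g p.1 k), ∑ y ∈ Ioc (g (p.2+1) l) (g p.2 l), f x y := by
    rw [Finset.sum_product, telescope (fun x => ∑ y ∈ Ioc 0 l, f x y) k N hk2]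
    refine Finset.sum_congr rfl fun a _ => ?_
    rw [Finset.sum_congr rfl (fun x _ => telescope (fun y => f x y) l N hl2),
      Finset.sum_comm]
  have hdom : ∀ p ∈ range N ×ˢ range N,
      (∑ x ∈ Ioc (g (p.1+1) k) (g p.1 k), ∑ y ∈ Ioc (g (p.2+1) l) (g p.2 l), f x y)^2
        ≤ ∑ i ∈ range (n/2^p.1), ∑ i' ∈ range (n/2^p.2),
            (∑ x ∈ Ioc (i*2^p.1) ((i+1)*2^p.1), ∑ y ∈ Ioc (i'*2^p.2) ((i'+1)*2^p.2), f x y)^2 := by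
    rintro ⟨a, b⟩ -
    simp only
    by_cases hka : g a k = g (a+1) k
    · rw [hka, Finset.Ioc_self, Finset.sum_empty]
      simp only [ne_eq, zero_pow, OfNat.ofNat_ne_zero, not_false_eq_true]
      positivity
    by_cases hlb : g b l = g (b+1) l
    · rw [hlb, Finset.Ioc_self]
      simp only [Finset.sum_empty, Finset.sum_const_zero]
      simp only [ne_eq, zero_pow, OfNat.ofNat_ne_zero, not_false_eq_true]
      positivity
    obtain ⟨i, hi, hi1, hi2⟩ := block_repr hk hka
    obtain ⟨i', hi', hi'1, hi'2⟩ := block_repr hl hlb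
    rw [hi1, hi2, hi'1, hi'2]
    calc (∑ x ∈ Ioc (i*2^a) ((i+1)*2^a), ∑ y ∈ Ioc (i'*2^b) ((i'+1)*2^b), f x y)^2
        ≤ ∑ i'' ∈ range (n/2^b),
            (∑ x ∈ Ioc (i*2^a) ((i+1)*2^a), ∑ y ∈ Ioc (i''*2^b) ((i''+1)*2^b), f x y)^2 :=
          Finset.single_le_sum (f := fun i'' =>
            (∑ x ∈ Ioc (i*2^a) ((i+1)*2^a), ∑ y ∈ Ioc (i''*2^b) ((i''+1)*2^b), f x y)^2)
            (fun _ _ => sq_nonneg _) hi'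
      _ ≤ ∑ i2 ∈ range (n/2^a), ∑ i'' ∈ range (n/2^b),
            (∑ x ∈ Ioc (i2*2^a) ((i2+1)*2^a), ∑ y ∈ Ioc (i''*2^b) ((i''+1)*2^b), f x y)^2 :=
          Finset.single_le_sum (f := fun i2 => ∑ i'' ∈ range (n/2^b),
            (∑ x ∈ Ioc (i2*2^a) ((i2+1)*2^a), ∑ y ∈ Ioc (i''*2^b) ((i''+1)*2^b), f x y)^2)
            (fun _ _ => Finset.sum_nonneg fun _ _ => sq_nonneg _) hi
  calc (∑ x ∈ Ioc 0 k, ∑ y ∈ Ioc 0 l, f x y)^2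
      = (∑ p ∈ range N ×ˢ range N,
          ∑ x ∈ Ioc (g (p.1+1) k) (g p.1 k), ∑ y ∈ Ioc (g (p.2+1) l) (g p.2 l), f x y)^2 := by
        rw [hid]
    _ ≤ ((range N ×ˢ range N).card : ℝ) * ∑ p ∈ range N ×ˢ range N,
          (∑ x ∈ Ioc (g (p.1+1) k) (g p.1 k), ∑ y ∈ Ioc (g (p.2+1) l) (g p.2 l), f x y)^2 :=
        sq_sum_le_card_mul_sum_sq
    _ ≤ (N:ℝ)^2 * ∑ p ∈ range N ×ˢ range N,
          ∑ i ∈ range (n/2^p.1), ∑ i' ∈ range (n/2^p.2),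
            (∑ x ∈ Ioc (i*2^p.1) ((i+1)*2^p.1), ∑ y ∈ Ioc (i'*2^p.2) ((i'+1)*2^p.2), f x y)^2 := by
        have hcard : ((range N ×ˢ range N).card : ℝ) = (N:ℝ)^2 := by
          rw [Finset.card_product, Finset.card_range]; push_cast; ring
        rw [hcard]
        exact mul_le_mul_of_nonneg_left (Finset.sum_le_sum hdom) (by positivity)
    _ = (N:ℝ)^2 * ∑ a ∈ range N, ∑ b ∈ range N, ∑ i ∈ range (n/2^a), ∑ i' ∈ range (n/2^b),
          (∑ x ∈ Ioc (i*2^a) ((i+1)*2^a), ∑ y ∈ Ioc (i'*2^b) ((i'+1)*2^b), f x y)^2 := by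
        rw [Finset.sum_product]

end Stmt11Aux

/-- Maximal inequality for doubly indexed partial sums: there is a universal
constant `K > 0` such that whenever the partial sums of a square-integrable array
`ξ` over every index rectangle in `[1,n]²` have second moment bounded by
`C·(area of the rectangle)`, one has
`P( max_{1≤k,l≤n} |Σ_{i≤k} Σ_{j≤l} ξ_{i,j}| ≥ ε n^{3/2} ) ≤ K C ε⁻² n^{−1/3}`. -/
theorem stmt_11 :
    ∃ K : ℝ, 0 < K ∧
      ∀ (Ω : Type) (_ : MeasurableSpace Ω) (P : Measure Ω),
        IsProbabilityMeasure P →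
        ∀ (n : ℕ) (hn : 2 ≤ n),
        ∀ (C : ℝ), 0 < C →
        ∀ (ξ : ℕ → ℕ → Ω → ℝ),
        (∀ i j, Measurable (ξ i j)) →
        (∀ q p h l : ℕ, q ≤ p → p ≤ n → h ≤ l → l ≤ n →
          Integrable
            (fun ω => (∑ i ∈ Icc (q + 1) p, ∑ j ∈ Icc (h + 1) l, ξ i j ω) ^ 2) P ∧
          ∫ ω, (∑ i ∈ Icc (q + 1) p, ∑ j ∈ Icc (h + 1) l, ξ i j ω) ^ 2 ∂P
            ≤ C * ((p : ℝ) - (q : ℝ)) * ((l : ℝ) - (h : ℝ))) →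
        ∀ ε : ℝ, 0 < ε →
          (P {ω | ε * (n : ℝ) ^ ((3 : ℝ) / 2)
              ≤ (Icc 1 n).sup' (Finset.nonempty_Icc.mpr (by omega)) (fun k =>
                  (Icc 1 n).sup' (Finset.nonempty_Icc.mpr (by omega)) (fun l =>
                    |∑ i ∈ Icc 1 k, ∑ j ∈ Icc 1 l, ξ i j ω|))}).toReal
            ≤ K * C * ε⁻¹ ^ 2 * ((n : ℝ) ^ ((1 : ℝ) / 3))⁻¹ := by
  refine ⟨20736, by norm_num, ?_⟩
  intro Ω mΩ P hP n hn C hC ξ hmeas hξ2 ε hε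
  have hn0 : 0 < n := by omega
  have hn0R : (0:ℝ) < n := by exact_mod_cast hn0
  set m := Nat.log 2 n with hm
  set N := m + 1 with hN
  have h2m : 2^m ≤ n := Nat.pow_log_le_self 2 (by omega)
  have hnN : n < 2^N := Nat.lt_pow_succ_log_self (by norm_num) n
  set M : Ω → ℝ := fun ω => (N:ℝ)^2 * ∑ a ∈ range N, ∑ b ∈ range N,
      ∑ i ∈ range (n/2^a), ∑ i' ∈ range (n/2^b),
        (∑ x ∈ Ioc (i*2^a) ((i+1)*2^a), ∑ y ∈ Ioc (i'*2^b) ((i'+1)*2^b), ξ x y ω)^2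
    with hM
  -- integrability and integral bound for each dyadic block
  have hblk : ∀ a : ℕ, ∀ i ∈ range (n/2^a), ∀ b : ℕ, ∀ i' ∈ range (n/2^b),
      Integrable (fun ω =>
        (∑ x ∈ Ioc (i*2^a) ((i+1)*2^a), ∑ y ∈ Ioc (i'*2^b) ((i'+1)*2^b), ξ x y ω)^2) P ∧
      ∫ ω, (∑ x ∈ Ioc (i*2^a) ((i+1)*2^a), ∑ y ∈ Ioc (i'*2^b) ((i'+1)*2^b), ξ x y ω)^2 ∂P
        ≤ C * 2^a * 2^b := by
    intro a i hi b i' hi'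
    have hpa : (i+1)*2^a ≤ n := by
      have h1 : i + 1 ≤ n / 2^a := by rw [mem_range] at hi; omega
      calc (i+1)*2^a ≤ n/2^a*2^a := Nat.mul_le_mul_right _ h1
        _ ≤ n := Nat.div_mul_le_self _ _
    have hpb : (i'+1)*2^b ≤ n := by
      have h1 : i' + 1 ≤ n / 2^b := by rw [mem_range] at hi'; omega
      calc (i'+1)*2^b ≤ n/2^b*2^b := Nat.mul_le_mul_right _ h1
        _ ≤ n := Nat.div_mul_le_self _ _
    have h := hξ2 (i*2^a) ((i+1)*2^a) (i'*2^b) ((i'+1)*2^b)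
      (Nat.mul_le_mul_right _ (Nat.le_succ i)) hpa (Nat.mul_le_mul_right _ (Nat.le_succ i')) hpb
    rw [show Icc (i*2^a + 1) ((i+1)*2^a) = Ioc (i*2^a) ((i+1)*2^a) by
        ext x; simp only [mem_Icc, mem_Ioc]; omega,
      show Icc (i'*2^b + 1) ((i'+1)*2^b) = Ioc (i'*2^b) ((i'+1)*2^b) by
        ext x; simp only [mem_Icc, mem_Ioc]; omega] at h
    refine ⟨h.1, le_trans h.2 (le_of_eq ?_)⟩
    push_cast
    ring
  have hI3 : ∀ a b : ℕ, Integrable (fun ω => ∑ i ∈ range (n/2^a), ∑ i' ∈ range (n/2^b),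
      (∑ x ∈ Ioc (i*2^a) ((i+1)*2^a), ∑ y ∈ Ioc (i'*2^b) ((i'+1)*2^b), ξ x y ω)^2) P :=
    fun a b => integrable_finset_sum _ (fun i hi =>
      integrable_finset_sum _ (fun i' hi' => (hblk a i hi b i' hi').1))
  have hI2 : ∀ a : ℕ, Integrable (fun ω => ∑ b ∈ range N, ∑ i ∈ range (n/2^a),
      ∑ i' ∈ range (n/2^b),
      (∑ x ∈ Ioc (i*2^a) ((i+1)*2^a), ∑ y ∈ Ioc (i'*2^b) ((i'+1)*2^b), ξ x y ω)^2) P :=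
    fun a => integrable_finset_sum _ (fun b _ => hI3 a b)
  have hMint : Integrable M P := by
    rw [hM]
    exact ((integrable_finset_sum _ (fun a _ => hI2 a)).const_mul _)
  have hMbound : ∫ ω, M ω ∂P ≤ C * (N:ℝ)^4 * (n:ℝ)^2 := by
    have e1 : ∀ a ∈ range N, ∫ ω, (∑ b ∈ range N, ∑ i ∈ range (n/2^a), ∑ i' ∈ range (n/2^b),
        (∑ x ∈ Ioc (i*2^a) ((i+1)*2^a), ∑ y ∈ Ioc (i'*2^b) ((i'+1)*2^b), ξ x y ω)^2) ∂P
        = ∑ b ∈ range N, ∑ i ∈ range (n/2^a), ∑ i' ∈ range (n/2^b),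
          ∫ ω, (∑ x ∈ Ioc (i*2^a) ((i+1)*2^a), ∑ y ∈ Ioc (i'*2^b) ((i'+1)*2^b), ξ x y ω)^2 ∂P := by
      intro a _
      rw [integral_finset_sum _ (fun b _ => hI3 a b)]
      refine Finset.sum_congr rfl fun b _ => ?_
      rw [integral_finset_sum _ (fun i hi =>
        integrable_finset_sum _ (fun i' hi' => (hblk a i hi b i' hi').1))]
      refine Finset.sum_congr rfl fun i hi => ?_
      rw [integral_finset_sum _ (fun i' hi' => (hblk a i hi b i' hi').1)]
    have hab : ∀ a b : ℕ, ∑ i ∈ range (n/2^a), ∑ i' ∈ range (n/2^b),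
        ∫ ω, (∑ x ∈ Ioc (i*2^a) ((i+1)*2^a), ∑ y ∈ Ioc (i'*2^b) ((i'+1)*2^b), ξ x y ω)^2 ∂P
        ≤ C * (n:ℝ)^2 := by
      intro a b
      have ha' : ((n/2^a : ℕ) : ℝ) * 2^a ≤ (n:ℝ) := by
        exact_mod_cast Nat.div_mul_le_self n (2^a)
      have hb' : ((n/2^b : ℕ) : ℝ) * 2^b ≤ (n:ℝ) := by
        exact_mod_cast Nat.div_mul_le_self n (2^b)
      have hmm : (((n/2^a : ℕ) : ℝ) * 2^a) * (((n/2^b : ℕ) : ℝ) * 2^b) ≤ (n:ℝ) * n :=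
        mul_le_mul ha' hb' (by positivity) (le_trans (by positivity) ha')
      calc ∑ i ∈ range (n/2^a), ∑ i' ∈ range (n/2^b),
            ∫ ω, (∑ x ∈ Ioc (i*2^a) ((i+1)*2^a), ∑ y ∈ Ioc (i'*2^b) ((i'+1)*2^b), ξ x y ω)^2 ∂P
          ≤ ∑ _i ∈ range (n/2^a), ∑ _i' ∈ range (n/2^b), C * 2^a * 2^b :=
            Finset.sum_le_sum (fun i hi => Finset.sum_le_sum (fun i' hi' => (hblk a i hi b i' hi').2))
        _ = ((n/2^a : ℕ) : ℝ) * (((n/2^b : ℕ) : ℝ) * (C * 2^a * 2^b)) := by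
            simp [Finset.sum_const, Finset.card_range, nsmul_eq_mul]
        _ = C * ((((n/2^a : ℕ) : ℝ) * 2^a) * (((n/2^b : ℕ) : ℝ) * 2^b)) := by ring
        _ ≤ C * ((n:ℝ) * n) := mul_le_mul_of_nonneg_left hmm hC.le
        _ = C * (n:ℝ)^2 := by ring
    calc ∫ ω, M ω ∂P
        = (N:ℝ)^2 * ∑ a ∈ range N, ∫ ω, (∑ b ∈ range N, ∑ i ∈ range (n/2^a),
            ∑ i' ∈ range (n/2^b),
            (∑ x ∈ Ioc (i*2^a) ((i+1)*2^a), ∑ y ∈ Ioc (i'*2^b) ((i'+1)*2^b), ξ x y ω)^2) ∂P := by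
          simp only [hM]
          rw [integral_const_mul, integral_finset_sum _ (fun a _ => hI2 a)]
      _ = (N:ℝ)^2 * ∑ a ∈ range N, ∑ b ∈ range N, ∑ i ∈ range (n/2^a), ∑ i' ∈ range (n/2^b),
            ∫ ω, (∑ x ∈ Ioc (i*2^a) ((i+1)*2^a), ∑ y ∈ Ioc (i'*2^b) ((i'+1)*2^b), ξ x y ω)^2 ∂P := by
          rw [Finset.sum_congr rfl e1]
      _ ≤ (N:ℝ)^2 * ∑ a ∈ range N, ∑ b ∈ range N, C * (n:ℝ)^2 := by
          refine mul_le_mul_of_nonneg_left ?_ (by positivity)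
          exact Finset.sum_le_sum (fun a _ => Finset.sum_le_sum (fun b _ => hab a b))
      _ = (N:ℝ)^2 * ((N:ℝ) * ((N:ℝ) * (C * (n:ℝ)^2))) := by
          simp [Finset.sum_const, Finset.card_range, nsmul_eq_mul]
      _ = C * (N:ℝ)^4 * (n:ℝ)^2 := by ring
  have hMnonneg : 0 ≤ᵐ[P] M := Filter.Eventually.of_forall (fun ω => by
    simp only [hM]; positivity)
  have markov := mul_meas_ge_le_integral_of_nonneg hMnonneg hMint (ε^2 * (n:ℝ)^3)
  have hfin : P {ω | ε^2 * (n:ℝ)^3 ≤ M ω} ≠ ⊤ := measure_ne_top P _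
  have ha : (0:ℝ) < ε^2 * (n:ℝ)^3 := by positivity
  have h5 : (P {ω | ε^2 * (n:ℝ)^3 ≤ M ω}).toReal ≤ (C * (N:ℝ)^4 * (n:ℝ)^2) / (ε^2 * (n:ℝ)^3) := by
    rw [le_div_iff₀ ha]
    calc (P {ω | ε^2 * (n:ℝ)^3 ≤ M ω}).toReal * (ε^2 * (n:ℝ)^3)
        = ε^2 * (n:ℝ)^3 * (P {ω | ε^2 * (n:ℝ)^3 ≤ M ω}).toReal := by ring
      _ ≤ ∫ ω, M ω ∂P := markov
      _ ≤ C * (N:ℝ)^4 * (n:ℝ)^2 := hMbound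
  -- inclusion of events
  have hsub : {ω | ε * (n : ℝ) ^ ((3 : ℝ) / 2)
      ≤ (Icc 1 n).sup' (Finset.nonempty_Icc.mpr (by omega)) (fun k =>
          (Icc 1 n).sup' (Finset.nonempty_Icc.mpr (by omega)) (fun l =>
            |∑ i ∈ Icc 1 k, ∑ j ∈ Icc 1 l, ξ i j ω|))}
      ⊆ {ω | ε^2 * (n:ℝ)^3 ≤ M ω} := by
    intro ω hω
    simp only [Set.mem_setOf_eq] at hω ⊢
    rw [Finset.le_sup'_iff] at hω
    obtain ⟨k, hk, hω⟩ := hω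
    rw [Finset.le_sup'_iff] at hω
    obtain ⟨l, hl, hω⟩ := hω
    have hIcck : Icc 1 k = Ioc 0 k := by ext x; simp only [mem_Icc, mem_Ioc]; omega
    have hIccl : Icc 1 l = Ioc 0 l := by ext x; simp only [mem_Icc, mem_Ioc]; omega
    rw [hIcck] at hω
    rw [Finset.sum_congr rfl (fun x _ => by rw [hIccl])] at hω
    have hk' : k ≤ n := (mem_Icc.mp hk).2
    have hl' : l ≤ n := (mem_Icc.mp hl).2
    have h1 : (ε * (n:ℝ)^((3:ℝ)/2))^2 ≤ (∑ x ∈ Ioc 0 k, ∑ y ∈ Ioc 0 l, ξ x y ω)^2 := by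
      rw [← sq_abs (∑ x ∈ Ioc 0 k, ∑ y ∈ Ioc 0 l, ξ x y ω)]
      exact pow_le_pow_left₀ (by positivity) hω 2
    have h2 : (ε * (n:ℝ)^((3:ℝ)/2))^2 = ε^2 * (n:ℝ)^3 := by
      rw [mul_pow]
      congr 1
      rw [← Real.rpow_natCast ((n:ℝ)^((3:ℝ)/2)) 2, ← Real.rpow_mul (Nat.cast_nonneg n),
        ← Real.rpow_natCast (n:ℝ) 3]
      norm_num
    have h3 := Stmt11Aux.key (fun x y => ξ x y ω) n N k l hk' hl' hnN
    simp only [hM]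
    calc ε^2 * (n:ℝ)^3 = (ε * (n:ℝ)^((3:ℝ)/2))^2 := h2.symm
      _ ≤ (∑ x ∈ Ioc 0 k, ∑ y ∈ Ioc 0 l, ξ x y ω)^2 := h1
      _ ≤ _ := h3
  -- arithmetic: N⁴ ≤ 12⁴ n^{2/3}
  have hnat : N^12 ≤ 12^12 * n^2 := by
    calc N^12 ≤ 12^12 * 2^m := Stmt11Aux.pow12 m
      _ ≤ 12^12 * n := Nat.mul_le_mul_left _ h2m
      _ ≤ 12^12 * n^2 := Nat.mul_le_mul_left _ (Nat.le_self_pow (by norm_num) n)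
  have hN4 : (N:ℝ)^4 ≤ 12^4 * (n:ℝ)^((2:ℝ)/3) := by
    refine le_of_pow_le_pow_left₀ (n := 3) (by norm_num) (by positivity) ?_
    have hcast : ((N:ℝ))^12 ≤ 12^12 * (n:ℝ)^2 := by exact_mod_cast hnat
    calc ((N:ℝ)^4)^3 = (N:ℝ)^12 := by ring
      _ ≤ 12^12 * (n:ℝ)^2 := hcast
      _ = (12^4 * (n:ℝ)^((2:ℝ)/3))^3 := by
          rw [mul_pow, ← Real.rpow_natCast ((n:ℝ)^((2:ℝ)/3)) 3,
            ← Real.rpow_mul (Nat.cast_nonneg n), ← Real.rpow_natCast (n:ℝ) 2]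
          norm_num
  have hr0 : (0:ℝ) < (n:ℝ)^((1:ℝ)/3) := Real.rpow_pos_of_pos hn0R _
  have hrt : (n:ℝ)^((2:ℝ)/3) * (n:ℝ)^((1:ℝ)/3) = (n:ℝ) := by
    rw [← Real.rpow_add hn0R]
    norm_num
  have key2 : (N:ℝ)^4 * (n:ℝ)^((1:ℝ)/3) ≤ 20736 * (n:ℝ) := by
    calc (N:ℝ)^4 * (n:ℝ)^((1:ℝ)/3) ≤ (12^4 * (n:ℝ)^((2:ℝ)/3)) * (n:ℝ)^((1:ℝ)/3) :=
        mul_le_mul_of_nonneg_right hN4 hr0.le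
      _ = 12^4 * ((n:ℝ)^((2:ℝ)/3) * (n:ℝ)^((1:ℝ)/3)) := by ring
      _ = 20736 * (n:ℝ) := by rw [hrt]; norm_num
  refine le_trans (ENNReal.toReal_mono hfin (measure_mono hsub)) (le_trans h5 ?_)
  have hre : 20736 * C * ε⁻¹^2 * ((n:ℝ)^((1:ℝ)/3))⁻¹
      = (20736 * C * (n:ℝ)^3 / ((n:ℝ)^((1:ℝ)/3))) / (ε^2 * (n:ℝ)^3) := by
    field_simp
  rw [hre]
  gcongr
  rw [le_div_iff₀ hr0]
  calc C * (N:ℝ)^4 * (n:ℝ)^2 * (n:ℝ)^((1:ℝ)/3)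
      = (C * (n:ℝ)^2) * ((N:ℝ)^4 * (n:ℝ)^((1:ℝ)/3)) := by ring
    _ ≤ (C * (n:ℝ)^2) * (20736 * (n:ℝ)) := mul_le_mul_of_nonneg_left key2 (by positivity)
    _ = 20736 * C * (n:ℝ)^3 := by ring
end

section
/- Let C > 0 and let (ξ_{i,j})_{i,j≥1} be real random variables on a probability space such that for all integers 0 ≤ q ≤ p and 0 ≤ h ≤ l, E[ ( Σ_{i=q+1}^{p} Σ_{j=h+1}^{l} ξ_{i,j} )² ] ≤ C (p−q)(l−h). Then n^{−3/2} max_{1≤k≤n} max_{1≤l≤n} | Σ_{i=1}^{k} Σ_{j=1}^{l} ξ_{i,j} | converges to 0 in probability as n → ∞. -/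
set_option maxHeartbeats 1000000

open MeasureTheory Finset Filter

section Aux

lemma myIcc (a b : ℕ) : Finset.Icc (a + 1) b = Finset.Ioc a b := by
  ext x; simp only [Finset.mem_Icc, Finset.mem_Ioc]; omega

/-- chain point: largest multiple of `2^(M-m)` at most `k`. -/
def km (M k m : ℕ) : ℕ := 2 ^ (M - m) * (k / 2 ^ (M - m))

lemma km_le_succ (M k m : ℕ) : km M k m ≤ km M k (m + 1) := by
  rcases le_or_gt M m with hm | hm
  · have h1 : M - m = 0 := by omega
    have h2 : M - (m+1) = 0 := by omega
    simp [km, h1, h2]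
  · have hMm : M - m = (M - (m+1)) + 1 := by omega
    set e := M - (m+1) with he
    rw [km, km, hMm]
    have hd : (2:ℕ)^e ∣ 2^(e+1) := pow_dvd_pow 2 (by omega)
    have hmm := Nat.mod_mod_of_dvd k hd
    have h1 := Nat.div_add_mod k (2^(e+1))
    have h2 := Nat.div_add_mod k (2^e)
    have h3 : k % 2^(e+1) % 2^e ≤ k % 2^(e+1) := Nat.mod_le _ _
    linarith

lemma km_zero (M k : ℕ) (hk : k < 2 ^ M) : km M k 0 = 0 := by
  simp [km, Nat.div_eq_of_lt hk]

lemma km_self (M k : ℕ) : km M k M = k := by simp [km]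

lemma km_mono (M k : ℕ) : Monotone (km M k) :=
  monotone_nat_of_le_succ (km_le_succ M k)

lemma sum_chain {β : Type*} [AddCommMonoid β] (g : ℕ → β) (f : ℕ → ℕ)
    (hf : Monotone f) (M : ℕ) :
    ∑ m ∈ Finset.range M, ∑ i ∈ Finset.Ioc (f m) (f (m + 1)), g i
      = ∑ i ∈ Finset.Ioc (f 0) (f M), g i := by
  induction M with
  | zero => simp
  | succ M ih =>
      rw [Finset.sum_range_succ, ih,
        Finset.sum_Ioc_consecutive _ (hf (Nat.zero_le M)) (hf (Nat.le_succ M))]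

lemma km_block {M k m : ℕ} (hk : k < 2 ^ M) (hm : m < M) :
    km M k (m + 1) = km M k m ∨
    ∃ b < 2 ^ (m + 1), km M k m = b * 2 ^ (M - (m + 1)) ∧
      km M k (m + 1) = (b + 1) * 2 ^ (M - (m + 1)) := by
  have hMm : M - m = (M - (m+1)) + 1 := by omega
  set e := M - (m+1) with he
  have hkm1 : km M k (m+1) = 2^e * (k / 2^e) := rfl
  have hkm : km M k m = 2^(e+1) * (k / 2^e / 2) := by
    rw [km, hMm, pow_succ, ← Nat.div_div_eq_div_mul]
  have hxlt : k / 2^e < 2^(m+1) := by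
    rw [Nat.div_lt_iff_lt_mul (pow_pos (by norm_num : (0:ℕ) < 2) e)]
    calc k < 2^M := hk
    _ = 2^(m+1) * 2^e := by rw [← pow_add]; congr 1; omega
  rcases Nat.even_or_odd (k / 2^e) with ⟨a, ha⟩ | ⟨a, ha⟩
  · left
    rw [hkm1, hkm, ha]
    have h2a : a + a = 2 * a := by ring
    rw [h2a, Nat.mul_div_cancel_left a (by norm_num)]
    ring
  · right
    refine ⟨2 * a, by omega, ?_, ?_⟩
    · rw [hkm, ha]
      have : (2 * a + 1) / 2 = a := by omega
      rw [this]; ring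
    · rw [hkm1, ha]; ring

lemma tendsto_logsq_div_sqrt :
    Tendsto (fun x : ℝ => (Real.logb 2 x + 1) ^ 2 / x ^ ((1:ℝ)/2)) atTop (nhds 0) := by
  have ha : Tendsto (fun x : ℝ => Real.log x / x ^ ((1:ℝ)/4)) atTop (nhds 0) :=
    (isLittleO_log_rpow_atTop (by norm_num : (0:ℝ) < 1/4)).tendsto_div_nhds_zero
  have hb : Tendsto (fun x : ℝ => (x ^ ((1:ℝ)/4))⁻¹) atTop (nhds 0) :=
    (tendsto_rpow_atTop (by norm_num : (0:ℝ) < 1/4)).inv_tendsto_atTop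
  have h1 : Tendsto (fun x : ℝ => (Real.logb 2 x + 1) / x ^ ((1:ℝ)/4)) atTop (nhds 0) := by
    have h := ((ha.const_mul (Real.log 2)⁻¹).add hb)
    rw [mul_zero, add_zero] at h
    refine h.congr' ?_
    filter_upwards [eventually_ge_atTop (1:ℝ)] with x hx
    have hy : x ^ ((1:ℝ)/4) ≠ 0 := by positivity
    have hl2 : Real.log 2 ≠ 0 :=
      Real.log_ne_zero_of_pos_of_ne_one (by norm_num) (by norm_num)
    rw [Real.logb]
    field_simp
  have h2 := h1.pow 2
  rw [show (0:ℝ) ^ 2 = 0 by norm_num] at h2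
  refine h2.congr' ?_
  filter_upwards [eventually_ge_atTop (1:ℝ)] with x hx
  rw [div_pow]
  congr 1
  rw [← Real.rpow_natCast (x ^ ((1:ℝ)/4)) 2, ← Real.rpow_mul (by linarith)]
  norm_num

variable {Ω : Type*} (ξ : ℕ → ℕ → Ω → ℝ)

/-- rectangle partial sum -/
def Rm (q p h l : ℕ) (ω : Ω) : ℝ :=
  ∑ i ∈ Finset.Ioc q p, ∑ j ∈ Finset.Ioc h l, ξ i j ω

/-- dyadic block sum at levels `m, m'` -/
def Bm (M m m' b b' : ℕ) (ω : Ω) : ℝ :=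
  Rm ξ (b * 2^(M-(m+1))) ((b+1) * 2^(M-(m+1)))
    (b' * 2^(M-(m'+1))) ((b'+1) * 2^(M-(m'+1))) ω

def idx (m m' : ℕ) : Finset (ℕ × ℕ) :=
  (Finset.range (2^(m+1))) ×ˢ (Finset.range (2^(m'+1)))

lemma idx_ne (m m' : ℕ) : (idx m m').Nonempty := by
  refine ⟨(0,0), Finset.mem_product.mpr ⟨?_, ?_⟩⟩ <;>
    exact Finset.mem_range.mpr (pow_pos (by norm_num : (0:ℕ) < 2) _)

/-- max of block sums at levels `m, m'` -/
def Gm (M m m' : ℕ) (ω : Ω) : ℝ :=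
  (idx m m').sup' (idx_ne m m') (fun p => |Bm ξ M m m' p.1 p.2 ω|)

/-- the dominating random variable -/
def Tm (M : ℕ) (ω : Ω) : ℝ :=
  ∑ m ∈ Finset.range M, ∑ m' ∈ Finset.range M, Gm ξ M m m' ω

lemma Gm_nonneg (M m m' : ℕ) (ω : Ω) : 0 ≤ Gm ξ M m m' ω := by
  obtain ⟨p, hp⟩ := idx_ne m m'
  have h1 := Finset.le_sup' (fun p : ℕ × ℕ => |Bm ξ M m m' p.1 p.2 ω|) hp
  rw [Gm]
  exact le_trans (abs_nonneg (Bm ξ M m m' p.1 p.2 ω)) h1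

lemma le_Gm {m m' b b' : ℕ} (M : ℕ) (hb : b < 2^(m+1)) (hb' : b' < 2^(m'+1)) (ω : Ω) :
    |Bm ξ M m m' b b' ω| ≤ Gm ξ M m m' ω := by
  have hmem : (b, b') ∈ idx m m' :=
    Finset.mem_product.mpr ⟨Finset.mem_range.mpr hb, Finset.mem_range.mpr hb'⟩
  have h1 := Finset.le_sup' (fun p : ℕ × ℕ => |Bm ξ M m m' p.1 p.2 ω|) hmem
  rw [Gm]
  exact h1

lemma Gm_sq_le (M m m' : ℕ) (ω : Ω) :
    (Gm ξ M m m' ω) ^ 2 ≤ ∑ p ∈ idx m m', (Bm ξ M m m' p.1 p.2 ω) ^ 2 := by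
  obtain ⟨p, hp, hEq⟩ :=
    Finset.exists_mem_eq_sup' (idx_ne m m') (fun p => |Bm ξ M m m' p.1 p.2 ω|)
  rw [Gm, hEq, sq_abs]
  exact Finset.single_le_sum (f := fun p : ℕ × ℕ => (Bm ξ M m m' p.1 p.2 ω) ^ 2)
    (fun q _ => sq_nonneg _) hp

lemma Rm_measurable [MeasurableSpace Ω] (hmeas : ∀ i j, Measurable (ξ i j))
    (q p h l : ℕ) : Measurable (Rm ξ q p h l) :=
  Finset.measurable_sum _ fun i _ => Finset.measurable_sum _ fun j _ => hmeas i j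

lemma Gm_measurable [MeasurableSpace Ω] (hmeas : ∀ i j, Measurable (ξ i j))
    (M m m' : ℕ) : Measurable (Gm ξ M m m') := by
  have h := Finset.measurable_sup' (idx_ne m m')
    (f := fun (p : ℕ × ℕ) (ω : Ω) => |Bm ξ M m m' p.1 p.2 ω|)
    (fun p _ => (Rm_measurable ξ hmeas _ _ _ _).abs)
  have heq : Gm ξ M m m' = (idx m m').sup' (idx_ne m m')
      (fun (p : ℕ × ℕ) (ω : Ω) => |Bm ξ M m m' p.1 p.2 ω|) := by
    funext ω
    rw [Gm, Finset.sup'_apply]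
  rw [heq]
  exact h

/-- key pointwise chaining bound -/
lemma abs_sum_le_Tm {M k l : ℕ} (hk : k < 2^M) (hl : l < 2^M) (ω : Ω) :
    |∑ i ∈ Finset.Ioc 0 k, ∑ j ∈ Finset.Ioc 0 l, ξ i j ω| ≤ Tm ξ M ω := by
  have hdec : ∑ i ∈ Finset.Ioc 0 k, ∑ j ∈ Finset.Ioc 0 l, ξ i j ω
      = ∑ m ∈ Finset.range M, ∑ m' ∈ Finset.range M,
          Rm ξ (km M k m) (km M k (m+1)) (km M l m') (km M l (m'+1)) ω := by
    calc ∑ i ∈ Finset.Ioc 0 k, ∑ j ∈ Finset.Ioc 0 l, ξ i j ω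
        = ∑ i ∈ Finset.Ioc (km M k 0) (km M k M), ∑ j ∈ Finset.Ioc 0 l, ξ i j ω := by
          rw [km_zero M k hk, km_self M k]
      _ = ∑ m ∈ Finset.range M, ∑ i ∈ Finset.Ioc (km M k m) (km M k (m+1)),
            ∑ j ∈ Finset.Ioc 0 l, ξ i j ω :=
          (sum_chain _ _ (km_mono M k) M).symm
      _ = ∑ m ∈ Finset.range M, ∑ i ∈ Finset.Ioc (km M k m) (km M k (m+1)),
            ∑ m' ∈ Finset.range M, ∑ j ∈ Finset.Ioc (km M l m') (km M l (m'+1)), ξ i j ω := by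
          refine Finset.sum_congr rfl fun m _ => Finset.sum_congr rfl fun i _ => ?_
          rw [sum_chain _ _ (km_mono M l) M, km_zero M l hl, km_self M l]
      _ = ∑ m ∈ Finset.range M, ∑ m' ∈ Finset.range M,
            Rm ξ (km M k m) (km M k (m+1)) (km M l m') (km M l (m'+1)) ω :=
          Finset.sum_congr rfl fun m _ => Finset.sum_comm
  rw [hdec, Tm]
  refine le_trans (Finset.abs_sum_le_sum_abs _ _) ?_
  refine le_trans (Finset.sum_le_sum fun m _ => Finset.abs_sum_le_sum_abs _ _) ?_
  refine Finset.sum_le_sum fun m hm => Finset.sum_le_sum fun m' hm' => ?_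
  have hmlt := Finset.mem_range.mp hm
  have hm'lt := Finset.mem_range.mp hm'
  rcases km_block hk hmlt with hdeg | ⟨b, hb, hb1, hb2⟩
  · have hz : Rm ξ (km M k m) (km M k (m+1)) (km M l m') (km M l (m'+1)) ω = 0 := by
      rw [hdeg, Rm]
      simp
    rw [hz, abs_zero]
    exact Gm_nonneg ξ M m m' ω
  · rcases km_block hl hm'lt with hdeg' | ⟨b', hb', hb1', hb2'⟩
    · have hz : Rm ξ (km M k m) (km M k (m+1)) (km M l m') (km M l (m'+1)) ω = 0 := by
        rw [hdeg', Rm]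
        simp
      rw [hz, abs_zero]
      exact Gm_nonneg ξ M m m' ω
    · have hRB : Rm ξ (km M k m) (km M k (m+1)) (km M l m') (km M l (m'+1)) ω
          = Bm ξ M m m' b b' ω := by
        rw [hb1, hb2, hb1', hb2', Bm]
      rw [hRB]
      exact le_Gm ξ M hb hb' ω

end Aux

/-- Negligibility of the degenerate part: if the partial sums of the array `ξ`
over every index rectangle have second moment bounded by `C·(area)`, then
`n^{−3/2} max_{1≤k,l≤n} |Σ_{i≤k} Σ_{j≤l} ξ_{i,j}| → 0` in probability.
(The max is taken over `Icc 0 n`; the extra indices `k = 0` or `l = 0` contribute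
the value `|0| = 0` and do not change the maximum for `n ≥ 1`.) -/
theorem stmt_12 {Ω : Type*} [MeasurableSpace Ω] (P : Measure Ω)
    [IsProbabilityMeasure P] (C : ℝ) (hC : 0 < C)
    (ξ : ℕ → ℕ → Ω → ℝ) (hmeas : ∀ i j, Measurable (ξ i j))
    (hmom : ∀ q p h l : ℕ, q ≤ p → h ≤ l →
      Integrable
        (fun ω => (∑ i ∈ Icc (q + 1) p, ∑ j ∈ Icc (h + 1) l, ξ i j ω) ^ 2) P ∧
      ∫ ω, (∑ i ∈ Icc (q + 1) p, ∑ j ∈ Icc (h + 1) l, ξ i j ω) ^ 2 ∂P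
        ≤ C * ((p : ℝ) - (q : ℝ)) * ((l : ℝ) - (h : ℝ))) :
    ∀ ε : ℝ, 0 < ε →
      Tendsto (fun n : ℕ =>
          (P {ω | ε ≤ ((n : ℝ) ^ ((3 : ℝ) / 2))⁻¹ *
              (Icc 0 n).sup' (Finset.nonempty_Icc.mpr (Nat.zero_le n)) (fun k =>
                (Icc 0 n).sup' (Finset.nonempty_Icc.mpr (Nat.zero_le n)) (fun l =>
                  |∑ i ∈ Icc 1 k, ∑ j ∈ Icc 1 l, ξ i j ω|))}).toReal)
        atTop (nhds 0) := by
  intro ε hε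
  classical
  have hmom' : ∀ q p h l : ℕ, q ≤ p → h ≤ l →
      Integrable (fun ω => (Rm ξ q p h l ω) ^ 2) P ∧
      ∫ ω, (Rm ξ q p h l ω) ^ 2 ∂P ≤ C * ((p:ℝ) - (q:ℝ)) * ((l:ℝ) - (h:ℝ)) := by
    intro q p h l hqp hhl
    have h0 := hmom q p h l hqp hhl
    simp only [myIcc] at h0
    exact h0
  -- the comparison bound
  apply squeeze_zero' (Eventually.of_forall fun n => ENNReal.toReal_nonneg)
    (g := fun n : ℕ => (2 * Real.sqrt C / ε) *
      ((Real.logb 2 n + 1) ^ 2 / (n:ℝ) ^ ((1:ℝ)/2)))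
  swap
  · have := (tendsto_logsq_div_sqrt.comp tendsto_natCast_atTop_atTop).const_mul
      (2 * Real.sqrt C / ε)
    simpa using this
  filter_upwards [eventually_ge_atTop 2] with n hn
  -- fixed n ≥ 2
  have hn0 : (0:ℝ) < (n:ℝ) := by exact_mod_cast (show 0 < n by omega)
  set M := Nat.clog 2 (n+1) with hM
  have hn2M : n < 2 ^ M := lt_of_lt_of_le (Nat.lt_succ_self n) (Nat.le_pow_clog one_lt_two _)
  have hM1 : 1 ≤ M := Nat.clog_pos one_lt_two (by omega)
  have h2M : 2 ^ M ≤ 2 * n := by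
    have h1 : 2 ^ (M-1) < n + 1 := Nat.pow_pred_clog_lt_self one_lt_two (by omega)
    have h2 : 2 ^ M = 2 * 2 ^ (M-1) := by
      rw [← pow_succ']
      congr 1
      omega
    omega
  have hble : ∀ (a c : ℕ), a * 2^c ≤ (a+1) * 2^c :=
    fun a c => Nat.mul_le_mul_right _ (Nat.le_succ a)
  have hBint : ∀ m m' b b', Integrable (fun ω => (Bm ξ M m m' b b' ω) ^ 2) P := by
    intro m m' b b'
    have := (hmom' _ _ _ _ (hble b (M-(m+1))) (hble b' (M-(m'+1)))).1
    simpa [Bm] using this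
  have hBval : ∀ m m' b b',
      ∫ ω, (Bm ξ M m m' b b' ω) ^ 2 ∂P ≤ C * 2^(M-(m+1)) * 2^(M-(m'+1)) := by
    intro m m' b b'
    have h0 := (hmom' _ _ _ _ (hble b (M-(m+1))) (hble b' (M-(m'+1)))).2
    have c1 : (((b+1) * 2^(M-(m+1)) : ℕ) : ℝ) - ((b * 2^(M-(m+1)) : ℕ) : ℝ)
        = 2^(M-(m+1)) := by push_cast; ring
    have c2 : (((b'+1) * 2^(M-(m'+1)) : ℕ) : ℝ) - ((b' * 2^(M-(m'+1)) : ℕ) : ℝ)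
        = 2^(M-(m'+1)) := by push_cast; ring
    rw [c1, c2] at h0
    exact h0
  have hsumint : ∀ m m',
      Integrable (fun ω => ∑ p ∈ idx m m', (Bm ξ M m m' p.1 p.2 ω) ^ 2) P :=
    fun m m' => integrable_finset_sum _ fun p _ => hBint m m' p.1 p.2
  have hG2int : ∀ m m', Integrable (fun ω => (Gm ξ M m m' ω) ^ 2) P := by
    intro m m'
    refine (hsumint m m').mono'
      ((Gm_measurable ξ hmeas M m m').pow_const 2).aestronglyMeasurable
      (ae_of_all _ fun ω => ?_)
    rw [Real.norm_eq_abs, abs_of_nonneg (sq_nonneg _)]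
    exact Gm_sq_le ξ M m m' ω
  have hG2val : ∀ m m', m < M → m' < M →
      ∫ ω, (Gm ξ M m m' ω) ^ 2 ∂P ≤ C * 2^M * 2^M := by
    intro m m' hm hm'
    have e1 : (2:ℝ)^(m+1) * 2^(M-(m+1)) = 2^M := by
      rw [← pow_add]; congr 1; omega
    have e2 : (2:ℝ)^(m'+1) * 2^(M-(m'+1)) = 2^M := by
      rw [← pow_add]; congr 1; omega
    calc ∫ ω, (Gm ξ M m m' ω) ^ 2 ∂P
        ≤ ∫ ω, ∑ p ∈ idx m m', (Bm ξ M m m' p.1 p.2 ω) ^ 2 ∂P :=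
          integral_mono (hG2int m m') (hsumint m m') (Gm_sq_le ξ M m m')
      _ = ∑ p ∈ idx m m', ∫ ω, (Bm ξ M m m' p.1 p.2 ω) ^ 2 ∂P :=
          integral_finset_sum _ fun p _ => hBint m m' p.1 p.2
      _ ≤ ∑ _p ∈ idx m m', (C * 2^(M-(m+1)) * 2^(M-(m'+1))) :=
          Finset.sum_le_sum fun p _ => hBval m m' p.1 p.2
      _ = ((idx m m').card : ℝ) * (C * 2^(M-(m+1)) * 2^(M-(m'+1))) := by
          rw [Finset.sum_const, nsmul_eq_mul]
      _ = ((2:ℝ)^(m+1) * 2^(m'+1)) * (C * 2^(M-(m+1)) * 2^(M-(m'+1))) := by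
          rw [idx, Finset.card_product, Finset.card_range, Finset.card_range]
          push_cast
          ring
      _ = C * 2^M * 2^M := by
          rw [show ((2:ℝ)^(m+1) * 2^(m'+1)) * (C * 2^(M-(m+1)) * 2^(M-(m'+1)))
              = C * ((2:ℝ)^(m+1) * 2^(M-(m+1))) * ((2:ℝ)^(m'+1) * 2^(M-(m'+1))) by ring,
            e1, e2]
  set t : ℝ := Real.sqrt C * 2^M with hth
  have ht : 0 < t := by positivity
  have ht2 : t ^ 2 = C * 2^M * 2^M := by
    rw [hth, mul_pow, Real.sq_sqrt hC.le]; ring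
  have hGptbd : ∀ m m' ω, Gm ξ M m m' ω ≤ ((Gm ξ M m m' ω) ^ 2 + t ^ 2) / (2 * t) := by
    intro m m' ω
    rw [le_div_iff₀ (by positivity)]
    nlinarith [sq_nonneg (Gm ξ M m m' ω - t)]
  have hGint : ∀ m m', Integrable (Gm ξ M m m') P := by
    intro m m'
    refine (((hG2int m m').add (integrable_const (t ^ 2))).div_const (2 * t)).mono'
      (Gm_measurable ξ hmeas M m m').aestronglyMeasurable (ae_of_all _ fun ω => ?_)
    rw [Real.norm_eq_abs, abs_of_nonneg (Gm_nonneg ξ M m m' ω)]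
    exact hGptbd m m' ω
  have hGval : ∀ m m', m < M → m' < M → ∫ ω, Gm ξ M m m' ω ∂P ≤ t := by
    intro m m' hm hm'
    have h1 : ∫ ω, Gm ξ M m m' ω ∂P
        ≤ ∫ ω, ((Gm ξ M m m' ω) ^ 2 + t ^ 2) / (2 * t) ∂P :=
      integral_mono (hGint m m')
        (((hG2int m m').add (integrable_const _)).div_const _) (hGptbd m m')
    have h2 : ∫ ω, ((Gm ξ M m m' ω) ^ 2 + t ^ 2) / (2 * t) ∂P
        = ((∫ ω, (Gm ξ M m m' ω) ^ 2 ∂P) + t ^ 2) / (2 * t) := by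
      rw [integral_div, integral_add (hG2int m m') (integrable_const _), integral_const]
      simp [measure_univ]
    rw [h2] at h1
    refine h1.trans ?_
    rw [div_le_iff₀ (by positivity)]
    nlinarith [hG2val m m' hm hm']
  have hTint : Integrable (Tm ξ M) P := by
    have : Tm ξ M = fun ω => ∑ m ∈ range M, ∑ m' ∈ range M, Gm ξ M m m' ω := rfl
    rw [this]
    exact integrable_finset_sum _ fun m _ => integrable_finset_sum _ fun m' _ => hGint m m'
  have hTnn : 0 ≤ᵐ[P] Tm ξ M := ae_of_all _ fun ω =>
    Finset.sum_nonneg fun m _ => Finset.sum_nonneg fun m' _ => Gm_nonneg ξ M m m' ω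
  have hTval : ∫ ω, Tm ξ M ω ∂P ≤ (M:ℝ) ^ 2 * t := by
    have h1 : ∫ ω, Tm ξ M ω ∂P = ∑ m ∈ range M, ∑ m' ∈ range M, ∫ ω, Gm ξ M m m' ω ∂P := by
      rw [show (fun ω => Tm ξ M ω) = fun ω => ∑ m ∈ range M, ∑ m' ∈ range M, Gm ξ M m m' ω
        from rfl]
      rw [integral_finset_sum _ fun m _ => integrable_finset_sum _ fun m' _ => hGint m m']
      exact Finset.sum_congr rfl fun m _ => integral_finset_sum _ fun m' _ => hGint m m'
    rw [h1]
    calc ∑ m ∈ range M, ∑ m' ∈ range M, ∫ ω, Gm ξ M m m' ω ∂P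
        ≤ ∑ _m ∈ range M, ∑ _m' ∈ range M, t :=
          Finset.sum_le_sum fun m hm => Finset.sum_le_sum fun m' hm' =>
            hGval m m' (Finset.mem_range.mp hm) (Finset.mem_range.mp hm')
      _ = (M:ℝ) ^ 2 * t := by
          rw [Finset.sum_const, Finset.sum_const, Finset.card_range, smul_smul,
            nsmul_eq_mul]
          push_cast
          ring
  -- Markov inequality
  have hc : (0:ℝ) < ε * (n:ℝ) ^ ((3:ℝ)/2) :=
    mul_pos hε (Real.rpow_pos_of_pos hn0 _)
  have hmark := mul_meas_ge_le_integral_of_nonneg hTnn hTint (ε * (n:ℝ) ^ ((3:ℝ)/2))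
  have hsub : {ω | ε ≤ ((n : ℝ) ^ ((3 : ℝ) / 2))⁻¹ *
      (Icc 0 n).sup' (Finset.nonempty_Icc.mpr (Nat.zero_le n)) (fun k =>
        (Icc 0 n).sup' (Finset.nonempty_Icc.mpr (Nat.zero_le n)) (fun l =>
          |∑ i ∈ Icc 1 k, ∑ j ∈ Icc 1 l, ξ i j ω|))}
      ⊆ {ω | ε * (n:ℝ) ^ ((3:ℝ)/2) ≤ Tm ξ M ω} := by
    intro ω hω
    simp only [Set.mem_setOf_eq] at hω ⊢
    have hsup : (Icc 0 n).sup' (Finset.nonempty_Icc.mpr (Nat.zero_le n)) (fun k =>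
        (Icc 0 n).sup' (Finset.nonempty_Icc.mpr (Nat.zero_le n)) (fun l =>
          |∑ i ∈ Icc 1 k, ∑ j ∈ Icc 1 l, ξ i j ω|)) ≤ Tm ξ M ω := by
      refine Finset.sup'_le _ _ fun k hk => Finset.sup'_le _ _ fun l hl => ?_
      have hkM : k < 2 ^ M := lt_of_le_of_lt (Finset.mem_Icc.mp hk).2 hn2M
      have hlM : l < 2 ^ M := lt_of_le_of_lt (Finset.mem_Icc.mp hl).2 hn2M
      have h := abs_sum_le_Tm ξ hkM hlM ω
      simpa only [myIcc] using h
    rw [inv_mul_eq_div] at hω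
    exact le_trans ((le_div_iff₀ (Real.rpow_pos_of_pos hn0 _)).mp hω) hsup
  have hPle : (P {ω | ε ≤ ((n : ℝ) ^ ((3 : ℝ) / 2))⁻¹ *
      (Icc 0 n).sup' (Finset.nonempty_Icc.mpr (Nat.zero_le n)) (fun k =>
        (Icc 0 n).sup' (Finset.nonempty_Icc.mpr (Nat.zero_le n)) (fun l =>
          |∑ i ∈ Icc 1 k, ∑ j ∈ Icc 1 l, ξ i j ω|))}).toReal
      ≤ ((M:ℝ) ^ 2 * t) / (ε * (n:ℝ) ^ ((3:ℝ)/2)) := by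
    have hmono := ENNReal.toReal_mono (measure_ne_top P _) (measure_mono hsub)
    rw [le_div_iff₀ hc]
    calc (P {ω | ε ≤ ((n : ℝ) ^ ((3 : ℝ) / 2))⁻¹ *
          (Icc 0 n).sup' (Finset.nonempty_Icc.mpr (Nat.zero_le n)) (fun k =>
            (Icc 0 n).sup' (Finset.nonempty_Icc.mpr (Nat.zero_le n)) (fun l =>
              |∑ i ∈ Icc 1 k, ∑ j ∈ Icc 1 l, ξ i j ω|))}).toReal
          * (ε * (n:ℝ) ^ ((3:ℝ)/2))
        ≤ (P {ω | ε * (n:ℝ) ^ ((3:ℝ)/2) ≤ Tm ξ M ω}).toReal * (ε * (n:ℝ) ^ ((3:ℝ)/2)) :=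
          mul_le_mul_of_nonneg_right hmono hc.le
      _ = (ε * (n:ℝ) ^ ((3:ℝ)/2)) * (P {ω | ε * (n:ℝ) ^ ((3:ℝ)/2) ≤ Tm ξ M ω}).toReal :=
          mul_comm _ _
      _ ≤ ∫ ω, Tm ξ M ω ∂P := hmark
      _ ≤ (M:ℝ) ^ 2 * t := hTval
  refine hPle.trans ?_
  -- bound M and 2^M
  have hL0 : (0:ℝ) ≤ Real.logb 2 (n:ℝ) + 1 := by
    have h5 : (1:ℝ) ≤ (n:ℝ) := by exact_mod_cast (show 1 ≤ n by omega)
    have := Real.logb_nonneg (b := 2) one_lt_two h5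
    linarith
  have hMle : (M:ℝ) ≤ Real.logb 2 (n:ℝ) + 1 := by
    have h1 : 2 ^ (M-1) ≤ n := by
      have h6 : 2 ^ (M-1) < n + 1 := Nat.pow_pred_clog_lt_self one_lt_two (by omega)
      omega
    have h1' : ((2:ℝ)) ^ (M-1) ≤ (n:ℝ) := by exact_mod_cast h1
    have h2 : Real.logb 2 ((2:ℝ) ^ (M-1)) ≤ Real.logb 2 (n:ℝ) :=
      (Real.logb_le_logb one_lt_two (by positivity) hn0).mpr h1'
    rw [Real.logb_pow, Real.logb_self_eq_one one_lt_two, mul_one] at h2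
    have h3 : ((M - 1 : ℕ) : ℝ) = (M:ℝ) - 1 := by
      have h4 : (1:ℕ) ≤ M := hM1
      push_cast [h4]
      ring
    rw [h3] at h2
    linarith
  have htle : t ≤ Real.sqrt C * (2 * n) := by
    rw [hth]
    have h2M' : ((2:ℝ)) ^ M ≤ 2 * (n:ℝ) := by exact_mod_cast h2M
    have := Real.sqrt_nonneg C
    nlinarith
  have hnum : (M:ℝ) ^ 2 * t ≤ (Real.logb 2 (n:ℝ) + 1) ^ 2 * (Real.sqrt C * (2 * n)) := by
    have hM0 : (0:ℝ) ≤ (M:ℝ) := Nat.cast_nonneg M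
    have hsq : (M:ℝ) ^ 2 ≤ (Real.logb 2 (n:ℝ) + 1) ^ 2 := by nlinarith
    nlinarith [ht.le, sq_nonneg ((M:ℝ))]
  have hstep : ((M:ℝ) ^ 2 * t) / (ε * (n:ℝ) ^ ((3:ℝ)/2))
      ≤ ((Real.logb 2 (n:ℝ) + 1) ^ 2 * (Real.sqrt C * (2 * n)))
          / (ε * (n:ℝ) ^ ((3:ℝ)/2)) :=
    (div_le_div_iff_of_pos_right hc).mpr hnum
  refine hstep.trans ?_
  -- final algebra
  have hrw : (n:ℝ) ^ ((3:ℝ)/2) = (n:ℝ) ^ ((1:ℝ)/2) * (n:ℝ) := by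
    rw [show ((3:ℝ)/2) = 1/2 + 1 by norm_num, Real.rpow_add hn0, Real.rpow_one]
  have hy0 : (0:ℝ) < (n:ℝ) ^ ((1:ℝ)/2) := Real.rpow_pos_of_pos hn0 _
  have key : ((Real.logb 2 (n:ℝ) + 1) ^ 2 * (Real.sqrt C * (2 * n)))
      / (ε * ((n:ℝ) ^ ((1:ℝ)/2) * (n:ℝ)))
      = (2 * Real.sqrt C / ε) * ((Real.logb 2 (n:ℝ) + 1) ^ 2 / (n:ℝ) ^ ((1:ℝ)/2)) := by
    have hy : (n:ℝ) ^ ((1:ℝ)/2) ≠ 0 := hy0.ne'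
    have hnne : (n:ℝ) ≠ 0 := hn0.ne'
    field_simp
  rw [hrw, key]
end
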